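/- Let A and B be stable matching instances on the same n workers and n firms such that all workers except possibly one worker w₁ have identical preference orders in A and B. If the set M_A ∩ M_B of matchings stable under both A and B is nonempty, then it contains a firm-optimal matching M⊥: a matching M⊥ ∈ M_A ∩ M_B such that for every M ∈ M_A ∩ M_B and every firm f, f weakly prefers M⊥⁻¹(f) to M⁻¹(f) under its preference order in A and also under its preference order in B. -/
import Mathlib


/-- A stable matching instance on `n` workers and `n` firms: each worker `w` has a strict
total preference order over firms encoded by an injective rank function `wRank w`
(lower rank = more preferred), and each firm `f` has one over workers (`fRank f`). -/
structure SMInstance (n : ℕ) where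
  wRank : Fin n → Fin n → Fin n
  fRank : Fin n → Fin n → Fin n
  wRank_inj : ∀ w, Function.Injective (wRank w)
  fRank_inj : ∀ f, Function.Injective (fRank f)

/-- `(w, f)` is a blocking pair of the matching `M` under instance `I`:
`M w ≠ f`, `w` strictly prefers `f` to `M w`, and `f` strictly prefers `w`
to its `M`-partner (the worker `w'` with `M w' = f`). -/
def Blocking {n : ℕ} (I : SMInstance n) (M : Fin n → Fin n) (w f : Fin n) : Prop :=
  M w ≠ f ∧ I.wRank w f < I.wRank w (M w) ∧
    ∃ w', M w' = f ∧ I.fRank f w < I.fRank f w'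

/-- A matching (bijection) is stable under `I` if it has no blocking pair. -/
def IsStable {n : ℕ} (I : SMInstance n) (M : Fin n → Fin n) : Prop :=
  Function.Bijective M ∧ ∀ w f, ¬ Blocking I M w f

/-- The join `M₁ ∨_I M₂`: each worker gets its less preferred partner. -/
def joinMap {n : ℕ} (I : SMInstance n) (M₁ M₂ : Fin n → Fin n) : Fin n → Fin n :=
  fun w => if I.wRank w (M₁ w) < I.wRank w (M₂ w) then M₂ w else M₁ w

/-- The meet `M₁ ∧_I M₂`: each worker gets its more preferred partner. -/
def meetMap {n : ℕ} (I : SMInstance n) (M₁ M₂ : Fin n → Fin n) : Fin n → Fin n :=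
  fun w => if I.wRank w (M₁ w) < I.wRank w (M₂ w) then M₁ w else M₂ w

section Aux

variable {n : ℕ}

lemma meetjoin_cases (I : SMInstance n) (M₁ M₂ : Fin n → Fin n) (w : Fin n) :
    (meetMap I M₁ M₂ w = M₁ w ∧ joinMap I M₁ M₂ w = M₂ w) ∨
    (meetMap I M₁ M₂ w = M₂ w ∧ joinMap I M₁ M₂ w = M₁ w) := by
  unfold meetMap joinMap
  split_ifs
  · exact Or.inl ⟨rfl, rfl⟩
  · exact Or.inr ⟨rfl, rfl⟩

lemma meet_le₁ (I : SMInstance n) (M₁ M₂ : Fin n → Fin n) (w : Fin n) :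
    I.wRank w (meetMap I M₁ M₂ w) ≤ I.wRank w (M₁ w) := by
  unfold meetMap; split_ifs with h
  exacts [le_rfl, le_of_not_gt h]

lemma meet_le₂ (I : SMInstance n) (M₁ M₂ : Fin n → Fin n) (w : Fin n) :
    I.wRank w (meetMap I M₁ M₂ w) ≤ I.wRank w (M₂ w) := by
  unfold meetMap; split_ifs with h
  exacts [le_of_lt h, le_rfl]

lemma le_join₁ (I : SMInstance n) (M₁ M₂ : Fin n → Fin n) (w : Fin n) :
    I.wRank w (M₁ w) ≤ I.wRank w (joinMap I M₁ M₂ w) := by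
  unfold joinMap; split_ifs with h
  exacts [le_of_lt h, le_rfl]

lemma le_join₂ (I : SMInstance n) (M₁ M₂ : Fin n → Fin n) (w : Fin n) :
    I.wRank w (M₂ w) ≤ I.wRank w (joinMap I M₁ M₂ w) := by
  unfold joinMap; split_ifs with h
  exacts [le_rfl, le_of_not_gt h]

/-- Helper: two stable matchings cannot "cross" at a firm. -/
lemma no_cross (I : SMInstance n) {M₁ M₂ : Fin n → Fin n}
    (h₁ : IsStable I M₁) (h₂ : IsStable I M₂) {w w' f : Fin n}
    (hww' : w ≠ w') (e₁ : M₁ w = f) (e₂ : M₂ w' = f)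
    (p₁ : I.wRank w f ≤ I.wRank w (M₂ w))
    (p₂ : I.wRank w' f ≤ I.wRank w' (M₁ w')) : False := by
  have hM₂w : M₂ w ≠ f := fun h => hww' (h₂.1.1 (h.trans e₂.symm))
  have hM₁w' : M₁ w' ≠ f := fun h => hww' (h₁.1.1 (e₁.trans h.symm))
  have p₁' : I.wRank w f < I.wRank w (M₂ w) :=
    p₁.lt_of_ne (fun h => hM₂w (I.wRank_inj w h).symm)
  have p₂' : I.wRank w' f < I.wRank w' (M₁ w') :=
    p₂.lt_of_ne (fun h => hM₁w' (I.wRank_inj w' h).symm)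
  rcases lt_or_ge (I.fRank f w) (I.fRank f w') with hf | hf
  · exact h₂.2 w f ⟨hM₂w, p₁', w', e₂, hf⟩
  · have hf' : I.fRank f w' < I.fRank f w :=
      hf.lt_of_ne (fun h => hww' ((I.fRank_inj f h).symm))
    exact h₁.2 w' f ⟨hM₁w', p₂', w, e₁, hf'⟩

lemma meet_inj (I : SMInstance n) {M₁ M₂ : Fin n → Fin n}
    (h₁ : IsStable I M₁) (h₂ : IsStable I M₂) :
    Function.Injective (meetMap I M₁ M₂) := by
  intro w w' he
  by_contra hne
  rcases meetjoin_cases I M₁ M₂ w with ⟨c, -⟩ | ⟨c, -⟩ <;>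
    rcases meetjoin_cases I M₁ M₂ w' with ⟨c', -⟩ | ⟨c', -⟩
  · exact hne (h₁.1.1 ((c.symm.trans he).trans c'))
  · exact no_cross I h₁ h₂ hne c.symm (c'.symm.trans he.symm)
      (c ▸ meet_le₂ I M₁ M₂ w)
      (by rw [he]; exact meet_le₁ I M₁ M₂ w')
  · exact no_cross I h₁ h₂ (Ne.symm hne) (c'.symm.trans he.symm) c.symm
      (by rw [he]; exact meet_le₂ I M₁ M₂ w')
      (c ▸ meet_le₁ I M₁ M₂ w)
  · exact hne (h₂.1.1 ((c.symm.trans he).trans c'))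

lemma meet_bij (I : SMInstance n) {M₁ M₂ : Fin n → Fin n}
    (h₁ : IsStable I M₁) (h₂ : IsStable I M₂) :
    Function.Bijective (meetMap I M₁ M₂) :=
  Finite.injective_iff_bijective.mp (meet_inj I h₁ h₂)

lemma map_univ_of_bij {g : Fin n → Fin n} (hg : Function.Bijective g) :
    Multiset.map g Finset.univ.val = Finset.univ.val := by
  have h := Finset.map_univ_equiv (Equiv.ofBijective g hg)
  have := congrArg Finset.val h
  rwa [Finset.map_val] at this

lemma join_bij (I : SMInstance n) {M₁ M₂ : Fin n → Fin n}
    (h₁ : IsStable I M₁) (h₂ : IsStable I M₂) :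
    Function.Bijective (joinMap I M₁ M₂) := by
  rw [← Finite.surjective_iff_bijective]
  have key : ∀ s : Multiset (Fin n),
      s.map (meetMap I M₁ M₂) + s.map (joinMap I M₁ M₂) = s.map M₁ + s.map M₂ := by
    intro s
    induction s using Multiset.induction_on with
    | empty => simp
    | cons a s ih =>
      simp only [Multiset.map_cons, Multiset.cons_add, Multiset.add_cons]
      rw [ih]
      rcases meetjoin_cases I M₁ M₂ a with ⟨c1, c2⟩ | ⟨c1, c2⟩
      · rw [c1, c2]
      · rw [c1, c2, Multiset.cons_swap]
  have h2 := key Finset.univ.val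
  rw [map_univ_of_bij h₁.1, map_univ_of_bij h₂.1, map_univ_of_bij (meet_bij I h₁ h₂)] at h2
  have hJ : Multiset.map (joinMap I M₁ M₂) Finset.univ.val = Finset.univ.val :=
    add_left_cancel h2
  intro f
  have hf : f ∈ Multiset.map (joinMap I M₁ M₂) Finset.univ.val := by
    rw [hJ]; exact Finset.mem_univ_val f
  obtain ⟨w, -, hw⟩ := Multiset.mem_map.1 hf
  exact ⟨w, hw⟩

/-- every firm weakly prefers its join-partner to its partners in both matchings -/
lemma join_firm (I : SMInstance n) {M₁ M₂ : Fin n → Fin n}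
    (h₁ : IsStable I M₁) (h₂ : IsStable I M₂) {f w w' : Fin n}
    (hJ : joinMap I M₁ M₂ w = f) (hM : M₁ w' = f ∨ M₂ w' = f) :
    I.fRank f w ≤ I.fRank f w' := by
  by_contra hle
  push_neg at hle
  have hww' : w ≠ w' := fun h => absurd (h ▸ hle) (lt_irrefl _)
  obtain ⟨u, hu⟩ := (meet_bij I h₁ h₂).2 f
  rcases meetjoin_cases I M₁ M₂ w with ⟨-, cJ⟩ | ⟨-, cJ⟩ <;>
    rcases meetjoin_cases I M₁ M₂ u with ⟨cK, -⟩ | ⟨cK, -⟩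
  -- case: J w = M₂ w, meet u = M₁ u
  · have e : M₂ w = f := cJ.symm.trans hJ
    have e' : M₁ u = f := cK.symm.trans hu
    have huw : u ≠ w := by
      intro h; subst h
      rcases hM with hm | hm
      · exact hww' (h₁.1.1 (e'.trans hm.symm))
      · exact hww' (h₂.1.1 (e.trans hm.symm))
    have huw' : u = w' := by
      rcases hM with hm | hm
      · exact h₁.1.1 (e'.trans hm.symm)
      · exact absurd (h₂.1.1 (e.trans hm.symm)) hww'
    rw [huw'] at hu huw
    have hM₂w' : M₂ w' ≠ f := fun h => huw (h₂.1.1 (h.trans e.symm))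
    have hp : I.wRank w' f ≤ I.wRank w' (M₂ w') := by
      have := meet_le₂ I M₁ M₂ w'
      rwa [hu] at this
    have hp' : I.wRank w' f < I.wRank w' (M₂ w') :=
      hp.lt_of_ne (fun h => hM₂w' (I.wRank_inj w' h).symm)
    exact h₂.2 w' f ⟨hM₂w', hp', w, e, hle⟩
  -- case: J w = M₂ w, meet u = M₂ u
  · have e : M₂ w = f := cJ.symm.trans hJ
    have e' : M₂ u = f := cK.symm.trans hu
    have huw : u = w := h₂.1.1 (e'.trans e.symm)
    subst huw
    have e₁ : M₁ u = f := by
      rcases meetjoin_cases I M₁ M₂ u with ⟨d1, d2⟩ | ⟨d1, d2⟩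
      · exact d1.symm.trans hu
      · exact d2.symm.trans hJ
    rcases hM with hm | hm
    · exact hww' (h₁.1.1 (e₁.trans hm.symm))
    · exact hww' (h₂.1.1 (e.trans hm.symm))
  -- case: J w = M₁ w, meet u = M₁ u
  · have e : M₁ w = f := cJ.symm.trans hJ
    have e' : M₁ u = f := cK.symm.trans hu
    have huw : u = w := h₁.1.1 (e'.trans e.symm)
    subst huw
    have e₂ : M₂ u = f := by
      rcases meetjoin_cases I M₁ M₂ u with ⟨d1, d2⟩ | ⟨d1, d2⟩
      · exact d2.symm.trans hJ
      · exact d1.symm.trans hu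
    rcases hM with hm | hm
    · exact hww' (h₁.1.1 (e.trans hm.symm))
    · exact hww' (h₂.1.1 (e₂.trans hm.symm))
  -- case: J w = M₁ w, meet u = M₂ u
  · have e : M₁ w = f := cJ.symm.trans hJ
    have e' : M₂ u = f := cK.symm.trans hu
    have huw : u ≠ w := by
      intro h; subst h
      rcases hM with hm | hm
      · exact hww' (h₁.1.1 (e.trans hm.symm))
      · exact hww' (h₂.1.1 (e'.trans hm.symm))
    have huw' : u = w' := by
      rcases hM with hm | hm
      · exact absurd (h₁.1.1 (e.trans hm.symm)) hww'
      · exact h₂.1.1 (e'.trans hm.symm)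
    rw [huw'] at hu huw
    have hM₁w' : M₁ w' ≠ f := fun h => huw (h₁.1.1 (h.trans e.symm))
    have hp : I.wRank w' f ≤ I.wRank w' (M₁ w') := by
      have := meet_le₁ I M₁ M₂ w'
      rwa [hu] at this
    have hp' : I.wRank w' f < I.wRank w' (M₁ w') :=
      hp.lt_of_ne (fun h => hM₁w' (I.wRank_inj w' h).symm)
    exact h₁.2 w' f ⟨hM₁w', hp', w, e, hle⟩

lemma join_stable (I : SMInstance n) {M₁ M₂ : Fin n → Fin n}
    (h₁ : IsStable I M₁) (h₂ : IsStable I M₂) :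
    IsStable I (joinMap I M₁ M₂) := by
  refine ⟨join_bij I h₁ h₂, fun w f hb => ?_⟩
  obtain ⟨hne, hlt, w'', hw'', hff⟩ := hb
  rcases meetjoin_cases I M₁ M₂ w with ⟨-, cJ⟩ | ⟨-, cJ⟩
  · -- J w = M₂ w : (w, f) blocks M₂
    obtain ⟨w₀, hw₀⟩ := h₂.1.2 f
    have h1 : I.fRank f w'' ≤ I.fRank f w₀ := join_firm I h₁ h₂ hw'' (Or.inr hw₀)
    exact h₂.2 w f ⟨cJ ▸ hne, cJ ▸ hlt, w₀, hw₀, lt_of_lt_of_le hff h1⟩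
  · obtain ⟨w₀, hw₀⟩ := h₁.1.2 f
    have h1 : I.fRank f w'' ≤ I.fRank f w₀ := join_firm I h₁ h₂ hw'' (Or.inl hw₀)
    exact h₁.2 w f ⟨cJ ▸ hne, cJ ▸ hlt, w₀, hw₀, lt_of_lt_of_le hff h1⟩

/-- two bijections on Fin n agreeing off a point agree -/
lemma bij_eq_of_eq_off {f g : Fin n → Fin n} (hf : Function.Bijective f)
    (hg : Function.Bijective g) (a : Fin n) (h : ∀ x, x ≠ a → f x = g x) : f = g := by
  funext x
  by_cases hx : x = a
  · subst hx
    obtain ⟨y, hy⟩ := hf.2 (g x)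
    by_cases hyx : y = x
    · exact hyx ▸ hy
    · exact absurd (hg.1 ((h y hyx).symm.trans hy)) hyx
  · exact h x hx

/-- if `Mb` is stable and every worker weakly prefers `M` to `Mb`, then
every firm weakly prefers its `Mb`-partner. -/
lemma firm_pref (I : SMInstance n) {Mb M : Fin n → Fin n} (hMb : IsStable I Mb)
    (hwp : ∀ w, I.wRank w (M w) ≤ I.wRank w (Mb w)) {f w w' : Fin n}
    (h1 : Mb w = f) (h2 : M w' = f) : I.fRank f w ≤ I.fRank f w' := by
  by_cases hww' : w = w'
  · exact hww' ▸ le_rfl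
  · have hbne : Mb w' ≠ f := fun h => hww' (hMb.1.1 (h1.trans h.symm))
    have hp : I.wRank w' f ≤ I.wRank w' (Mb w') := h2 ▸ hwp w'
    have hp' : I.wRank w' f < I.wRank w' (Mb w') :=
      hp.lt_of_ne (fun h => hbne (I.wRank_inj w' h).symm)
    by_contra hlt
    push_neg at hlt
    exact hMb.2 w' f ⟨hbne, hp', w, h1, hlt⟩

end Aux

/-- if A and B are (1,n) and some matching is stable under both, then
there is a firm-optimal matching stable under both: every firm weakly prefers its
partner there, under its preference order in A and also in B. -/
theorem stmt12 {n : ℕ} (hn : 1 ≤ n) (A B : SMInstance n) (w₁ : Fin n)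
    (hW : ∀ w, w ≠ w₁ → A.wRank w = B.wRank w)
    (hne : ∃ M, IsStable A M ∧ IsStable B M) :
    ∃ Mbot, (IsStable A Mbot ∧ IsStable B Mbot) ∧
      ∀ M, (IsStable A M ∧ IsStable B M) →
        ∀ f w w', Mbot w = f → M w' = f →
          A.fRank f w ≤ A.fRank f w' ∧ B.fRank f w ≤ B.fRank f w' := by
  classical
  obtain ⟨M₀, hM₀⟩ := hne
  set S : Finset (Fin n → Fin n) :=
    Finset.univ.filter (fun M => IsStable A M ∧ IsStable B M) with hS
  have hmem : ∀ M, M ∈ S ↔ (IsStable A M ∧ IsStable B M) := by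
    intro M; simp [hS]
  have hSne : S.Nonempty := ⟨M₀, (hmem M₀).2 hM₀⟩
  obtain ⟨Mb, hMbS, hmax⟩ :=
    S.exists_max_image (fun M => ∑ w, (A.wRank w (M w) : ℕ)) hSne
  obtain ⟨hMbA, hMbB⟩ := (hmem Mb).1 hMbS
  -- joins under A and B agree for matchings stable under both
  have join_agree : ∀ M ∈ S, joinMap A Mb M = joinMap B Mb M := by
    intro M hM
    obtain ⟨hMA, hMB⟩ := (hmem M).1 hM
    apply bij_eq_of_eq_off (join_bij A hMbA hMA) (join_bij B hMbB hMB) w₁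
    intro x hx
    unfold joinMap
    rw [hW x hx]
  -- key: every worker weakly prefers any M ∈ S to Mb, under both A and B ranks
  have key : ∀ M ∈ S, ∀ w,
      A.wRank w (M w) ≤ A.wRank w (Mb w) ∧ B.wRank w (M w) ≤ B.wRank w (Mb w) := by
    intro M hM
    obtain ⟨hMA, hMB⟩ := (hmem M).1 hM
    have hJA : IsStable A (joinMap A Mb M) := join_stable A hMbA hMA
    have hJB : IsStable B (joinMap A Mb M) := by
      rw [join_agree M hM]; exact join_stable B hMbB hMB
    have hJS : joinMap A Mb M ∈ S := (hmem _).2 ⟨hJA, hJB⟩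
    have hsumle : ∑ w, (A.wRank w (joinMap A Mb M w) : ℕ) ≤
        ∑ w, (A.wRank w (Mb w) : ℕ) := hmax _ hJS
    have hptle : ∀ w ∈ Finset.univ, (A.wRank w (Mb w) : ℕ) ≤
        (A.wRank w (joinMap A Mb M w) : ℕ) := fun w _ => le_join₁ A Mb M w
    have hsumge := Finset.sum_le_sum hptle
    have hsumeq : ∑ w, (A.wRank w (Mb w) : ℕ) =
        ∑ w, (A.wRank w (joinMap A Mb M w) : ℕ) := le_antisymm hsumge hsumle
    have hpteq := (Finset.sum_eq_sum_iff_of_le hptle).1 hsumeq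
    have hJeq : joinMap A Mb M = Mb := by
      funext w
      have h1 := hpteq w (Finset.mem_univ w)
      have h2 : A.wRank w (Mb w) = A.wRank w (joinMap A Mb M w) := Fin.val_injective h1
      exact (A.wRank_inj w h2).symm
    intro w
    constructor
    · have := le_join₂ A Mb M w
      rwa [hJeq] at this
    · have := le_join₂ B Mb M w
      rw [← join_agree M hM, hJeq] at this
      exact this
  refine ⟨Mb, ⟨hMbA, hMbB⟩, ?_⟩
  intro M hM f w w' h1 h2
  have hMS : M ∈ S := (hmem M).2 hM
  exact ⟨firm_pref A hMbA (fun w => (key M hMS w).1) h1 h2,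
    firm_pref B hMbB (fun w => (key M hMS w).2) h1 h2⟩
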